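/- The semigroup of endomorphisms {σ_{l,m} : l ∈ ℕ, m ≥ 1} of C₊ under composition is isomorphic to the direct product RZ(ℕ) × (ℕ₊, ·), where RZ(ℕ) is ℕ with the right-zero multiplication x·y = y and (ℕ₊, ·) is the multiplicative semigroup of positive integers. -/
import Mathlib


def bmul (x y : ℕ × ℕ) : ℕ × ℕ :=
  (x.1 + y.1 - min x.2 y.1, x.2 + y.2 - min x.2 y.1)

abbrev Cplus := {x : ℕ × ℕ // x.1 ≤ x.2}

instance : Mul Cplus :=
  ⟨fun x y => ⟨bmul x.1 y.1, by have hx := x.2; have hy := y.2; simp only [bmul]; omega⟩⟩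

instance : One Cplus := ⟨⟨(0, 0), le_refl 0⟩⟩

theorem Cplus.mul_def (x y : Cplus) : (x * y).1 = bmul x.1 y.1 := rfl

theorem Cplus.one_def : (1 : Cplus).1 = (0, 0) := rfl

instance : Monoid Cplus where
  mul_assoc x y z := Subtype.ext (by
    simp only [Cplus.mul_def, bmul, Prod.ext_iff]; omega)
  one_mul x := Subtype.ext (by
    have := x.2
    simp only [Cplus.mul_def, Cplus.one_def, bmul, Prod.ext_iff]; omega)
  mul_one x := Subtype.ext (by
    have := x.2
    simp only [Cplus.mul_def, Cplus.one_def, bmul, Prod.ext_iff]; omega)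

def lam (k : ℕ) : Cplus → Cplus :=
  fun x => ⟨(k * x.1.1, k * x.1.2), Nat.mul_le_mul_left k x.2⟩

def sig (l m : ℕ) : Cplus → Cplus := fun x =>
  if x.1.1 = x.1.2 then 1 else ⟨(l, l + m * (x.1.2 - x.1.1)), by omega⟩

def lamns (n s : ℕ) : Cplus → Cplus := fun x =>
  if x.1.1 = 0 then ⟨(0, n * x.1.2), Nat.zero_le _⟩
  else ⟨(n * x.1.1 - s, n * x.1.2 - s), by
    have := Nat.mul_le_mul_left n x.2; omega⟩

def vsig : Cplus → Cplus := fun x =>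
  if x.1 = (0, 0) then 1 else ⟨(x.1.1 + 1, x.1.2 + 1), by have := x.2; omega⟩

def bpow (x : ℕ × ℕ) : ℕ → ℕ × ℕ
  | 0 => (0, 0)
  | n + 1 => bmul (bpow x n) x

/-- The direct product RZ(ℕ) × (ℕ₊, ·): ℕ with right-zero multiplication times the
multiplicative semigroup of positive integers. -/
def RZprod : Type := ℕ × {m : ℕ // 1 ≤ m}

instance : Mul RZprod :=
  ⟨fun p q => (q.1, ⟨p.2.1 * q.2.1, Nat.mul_pos p.2.2 q.2.2⟩)⟩

/-- (l,m) ↦ σ_{l,m} is a bijection from RZ(ℕ) × (ℕ₊, ·) onto the family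
{σ_{l,m}} carrying the product to composition, i.e. the semigroup of the σ's under
composition is isomorphic to RZ(ℕ) × (ℕ₊, ·). -/
theorem sig_family_iso :
    Function.Injective (fun p : RZprod => sig p.1 p.2.1) ∧
    ∀ p q : RZprod, sig (p * q).1 (p * q).2.1 = sig q.1 q.2.1 ∘ sig p.1 p.2.1 := by
  constructor
  · intro p q h
    rcases p with ⟨l1, m1, hm1⟩
    rcases q with ⟨l2, m2, hm2⟩
    have h1 := congrFun h ⟨(0, 1), by omega⟩
    simp [sig, Subtype.ext_iff, Prod.ext_iff] at h1
    have : ((l1, ⟨m1, hm1⟩) : ℕ × {m : ℕ // 1 ≤ m}) = (l2, ⟨m2, hm2⟩) := by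
      refine Prod.ext ?_ (Subtype.ext ?_) <;> simp <;> omega
    exact this
  · intro p q
    funext x
    rcases x with ⟨⟨i, j⟩, hij⟩
    by_cases h : i = j
    · simp [sig, h, Function.comp, Cplus.one_def]
    · have hp := p.2.2
      have hij' : i < j := by omega
      have hlt : p.1 < p.1 + p.2.1 * (j - i) := by
        have : 1 ≤ j - i := by omega
        nlinarith
      have e1 : sig p.1 p.2.1 ⟨(i, j), hij⟩
          = ⟨(p.1, p.1 + p.2.1 * (j - i)), by omega⟩ := by
        simp [sig, h]
      have e2 : sig q.1 q.2.1 ⟨(p.1, p.1 + p.2.1 * (j - i)), by omega⟩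
          = ⟨(q.1, q.1 + q.2.1 * (p.2.1 * (j - i))), by omega⟩ := by
        simp only [sig]
        rw [if_neg hlt.ne]
        exact Subtype.ext (Prod.ext rfl (by
          show q.1 + q.2.1 * (p.1 + p.2.1 * (j - i) - p.1)
              = q.1 + q.2.1 * (p.2.1 * (j - i))
          congr 2
          omega))
      show sig (p * q).1 (p * q).2.1 ⟨(i, j), hij⟩ = _
      rw [Function.comp_apply, e1, e2]
      simp only [sig]
      rw [if_neg h]
      refine Subtype.ext (Prod.ext rfl ?_)
      show (p * q).1 + (p * q).2.1 * (j - i) = q.1 + q.2.1 * (p.2.1 * (j - i))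
      have he1 : (p * q).1 = q.1 := rfl
      have h2 : (p * q).2.1 = p.2.1 * q.2.1 := rfl
      rw [he1, h2]; ring
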